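/- Let n be a positive integer, S, Q ∈ ℝ^{n×n} with S ≻ 0 and Q ≻ 0, ρ₁ > 0 such that Q − ρ₁·S ⪰ 0, ς ∈ (0,1), and R ∈ ℝ^{n×n} an arbitrary matrix. Then there exist μ > 0 and σ > 0 such that μ·[[−Q + ς·ρ₁·S, R],[Rᵀ, 0]] − [[−σ²·I, 0],[0, I]] ⪯ 0. -/

import Mathlib

open Matrix

private lemma psd_sub_smul_one {n : ℕ} {M : Matrix (Fin n) (Fin n) ℝ}
    (hM : M.IsHermitian) (t : ℝ) (ht : ∀ i, t ≤ hM.eigenvalues i) :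
    (M - t • (1 : Matrix (Fin n) (Fin n) ℝ)).PosSemidef := by
  have hkey : M - t • (1 : Matrix (Fin n) (Fin n) ℝ) =
      (hM.eigenvectorUnitary : Matrix (Fin n) (Fin n) ℝ) *
        Matrix.diagonal (fun i => hM.eigenvalues i - t) *
        ((hM.eigenvectorUnitary : Matrix (Fin n) (Fin n) ℝ))ᴴ := by
    have hU : (hM.eigenvectorUnitary : Matrix (Fin n) (Fin n) ℝ) *
        star (hM.eigenvectorUnitary : Matrix (Fin n) (Fin n) ℝ) = 1 :=
      (Matrix.mem_unitaryGroup_iff).mp hM.eigenvectorUnitary.2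
    have hd : Matrix.diagonal (fun i => hM.eigenvalues i - t) =
        Matrix.diagonal (RCLike.ofReal ∘ hM.eigenvalues) -
          t • (1 : Matrix (Fin n) (Fin n) ℝ) := by
      rw [Matrix.smul_one_eq_diagonal, ← Matrix.diagonal_sub]
      simp [RCLike.ofReal_real_eq_id]
    have hs := hM.spectral_theorem
    rw [Unitary.conjStarAlgAut_apply] at hs
    rw [← Matrix.star_eq_conjTranspose, hd, Matrix.mul_sub, Matrix.sub_mul,
      ← hs, Matrix.mul_smul, Matrix.smul_mul, Matrix.mul_one, hU]
  rw [hkey]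
  exact (Matrix.PosSemidef.diagonal (fun i => sub_nonneg.mpr (ht i))).mul_mul_conjTranspose_same _

private lemma psd_smul_one_sub {n : ℕ} {M : Matrix (Fin n) (Fin n) ℝ}
    (hM : M.IsHermitian) (t : ℝ) (ht : ∀ i, hM.eigenvalues i ≤ t) :
    (t • (1 : Matrix (Fin n) (Fin n) ℝ) - M).PosSemidef := by
  have hkey : t • (1 : Matrix (Fin n) (Fin n) ℝ) - M =
      (hM.eigenvectorUnitary : Matrix (Fin n) (Fin n) ℝ) *
        Matrix.diagonal (fun i => t - hM.eigenvalues i) *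
        ((hM.eigenvectorUnitary : Matrix (Fin n) (Fin n) ℝ))ᴴ := by
    have hU : (hM.eigenvectorUnitary : Matrix (Fin n) (Fin n) ℝ) *
        star (hM.eigenvectorUnitary : Matrix (Fin n) (Fin n) ℝ) = 1 :=
      (Matrix.mem_unitaryGroup_iff).mp hM.eigenvectorUnitary.2
    have hd : Matrix.diagonal (fun i => t - hM.eigenvalues i) =
        t • (1 : Matrix (Fin n) (Fin n) ℝ) -
          Matrix.diagonal (RCLike.ofReal ∘ hM.eigenvalues) := by
      rw [Matrix.smul_one_eq_diagonal, ← Matrix.diagonal_sub]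
      simp [RCLike.ofReal_real_eq_id]
    have hs := hM.spectral_theorem
    rw [Unitary.conjStarAlgAut_apply] at hs
    rw [← Matrix.star_eq_conjTranspose, hd, Matrix.mul_sub, Matrix.sub_mul,
      ← hs, Matrix.mul_smul, Matrix.smul_mul, Matrix.mul_one, hU]
  rw [hkey]
  exact (Matrix.PosSemidef.diagonal (fun i => sub_nonneg.mpr (ht i))).mul_mul_conjTranspose_same _

private lemma posDef_smul {n : ℕ} {M : Matrix (Fin n) (Fin n) ℝ} (hM : M.PosDef)
    {c : ℝ} (hc : 0 < c) : (c • M).PosDef := by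
  refine ⟨?_, fun x hx => ?_⟩
  · unfold Matrix.IsHermitian
    rw [Matrix.conjTranspose_smul, hM.1.eq]
    simp
  · exact (hM.smul hc).2 hx

private lemma posSemidef_smul {n : ℕ} {M : Matrix (Fin n) (Fin n) ℝ} (hM : M.PosSemidef)
    {c : ℝ} (hc : 0 ≤ c) : (c • M).PosSemidef := by
  refine ⟨?_, fun x => ?_⟩
  · unfold Matrix.IsHermitian
    rw [Matrix.conjTranspose_smul, hM.1.eq]
    simp
  · exact (hM.smul hc).2 x

theorem stmt_19 (n : ℕ) (hn : 0 < n)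
    (S Q : Matrix (Fin n) (Fin n) ℝ) (hS : S.PosDef) (hQ : Q.PosDef)
    (ρ₁ : ℝ) (hρ₁ : 0 < ρ₁) (hQS : (Q - ρ₁ • S).PosSemidef)
    (ς : ℝ) (hς : ς ∈ Set.Ioo (0 : ℝ) 1)
    (R : Matrix (Fin n) (Fin n) ℝ) :
    ∃ μ σ : ℝ, 0 < μ ∧ 0 < σ ∧
      (-(μ • Matrix.fromBlocks (-Q + (ς * ρ₁) • S) R Rᵀ
            (0 : Matrix (Fin n) (Fin n) ℝ) -
          Matrix.fromBlocks ((-(σ ^ 2)) • (1 : Matrix (Fin n) (Fin n) ℝ)) 0 0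
            (1 : Matrix (Fin n) (Fin n) ℝ))).PosSemidef := by
  obtain ⟨hς0, hς1⟩ := hς
  haveI : Nonempty (Fin n) := ⟨⟨0, hn⟩⟩
  -- P := Q - (ς * ρ₁) • S is positive definite
  set P : Matrix (Fin n) (Fin n) ℝ := Q - (ς * ρ₁) • S with hPdef
  have hP : P.PosDef := by
    have h1 : P = (Q - ρ₁ • S) + ((1 - ς) * ρ₁) • S := by
      rw [hPdef, sub_mul, one_mul, sub_smul]
      abel
    rw [h1]
    exact Matrix.PosDef.posSemidef_add hQS (posDef_smul hS (mul_pos (by linarith) hρ₁))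
  -- smallest eigenvalue of P
  set ε : ℝ := Finset.univ.inf' Finset.univ_nonempty hP.1.eigenvalues with hεdef
  have hε : 0 < ε := by
    rw [hεdef, Finset.lt_inf'_iff]
    exact fun i _ => hP.eigenvalues_pos i
  have hPε : (P - ε • (1 : Matrix (Fin n) (Fin n) ℝ)).PosSemidef :=
    psd_sub_smul_one hP.1 ε (fun i => Finset.inf'_le _ (Finset.mem_univ i))
  -- M := R * Rᵀ is positive semidefinite
  have hRT : Rᵀ = Rᴴ := by
    ext i j; simp [Matrix.conjTranspose_apply]
  set M : Matrix (Fin n) (Fin n) ℝ := R * Rᵀ with hMdef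
  have hM : M.PosSemidef := by
    rw [hMdef, hRT]
    exact Matrix.posSemidef_self_mul_conjTranspose R
  -- largest eigenvalue bound for M
  set c : ℝ := Finset.univ.sup' Finset.univ_nonempty hM.1.eigenvalues + 1 with hcdef
  have hc : 0 < c := by
    have := hM.eigenvalues_nonneg (Classical.arbitrary (Fin n))
    have h2 := Finset.le_sup' hM.1.eigenvalues (Finset.mem_univ (Classical.arbitrary (Fin n)))
    rw [hcdef]; linarith
  have hMc : (c • (1 : Matrix (Fin n) (Fin n) ℝ) - M).PosSemidef := by
    refine psd_smul_one_sub hM.1 c (fun i => ?_)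
    have := Finset.le_sup' hM.1.eigenvalues (Finset.mem_univ i)
    rw [hcdef]; linarith
  -- choose μ and σ
  set μ : ℝ := ε / (2 * c) with hμdef
  have hμ : 0 < μ := by positivity
  set σ : ℝ := Real.sqrt (μ * ε / 2) with hσdef
  have hσ : 0 < σ := Real.sqrt_pos.mpr (by positivity)
  have hσ2 : σ ^ 2 = μ * ε / 2 := Real.sq_sqrt (by positivity)
  have hμc : μ * c = ε / 2 := by
    rw [hμdef]; field_simp
  refine ⟨μ, σ, hμ, hσ, ?_⟩
  -- rewrite the big matrix in fromBlocks form
  have hkey : -(μ • Matrix.fromBlocks (-Q + (ς * ρ₁) • S) R Rᵀ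
            (0 : Matrix (Fin n) (Fin n) ℝ) -
          Matrix.fromBlocks ((-(σ ^ 2)) • (1 : Matrix (Fin n) (Fin n) ℝ)) 0 0
            (1 : Matrix (Fin n) (Fin n) ℝ)) =
      Matrix.fromBlocks (μ • P - (σ ^ 2) • (1 : Matrix (Fin n) (Fin n) ℝ))
        (-(μ • R)) (-(μ • R))ᴴ (1 : Matrix (Fin n) (Fin n) ℝ) := by
    rw [hPdef]
    ext i j
    rcases i with i | i <;> rcases j with j | j <;>
      simp [Matrix.fromBlocks, Matrix.sub_apply, Matrix.add_apply, Matrix.smul_apply,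
        Matrix.neg_apply, Matrix.conjTranspose_apply, Matrix.one_apply, smul_eq_mul] <;>
      ring
  rw [hkey]
  haveI : Invertible (1 : Matrix (Fin n) (Fin n) ℝ) := invertibleOne
  rw [Matrix.PosDef.fromBlocks₂₂ _ _ Matrix.PosDef.one]
  have hexp : μ • P - (σ ^ 2) • (1 : Matrix (Fin n) (Fin n) ℝ) -
        -(μ • R) * (1 : Matrix (Fin n) (Fin n) ℝ)⁻¹ * (-(μ • R))ᴴ =
      μ • (P - ε • (1 : Matrix (Fin n) (Fin n) ℝ)) +
        (μ * μ) • (c • (1 : Matrix (Fin n) (Fin n) ℝ) - M) := by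
    rw [inv_one, Matrix.mul_one, Matrix.conjTranspose_neg, Matrix.neg_mul, Matrix.mul_neg,
      neg_neg, Matrix.conjTranspose_smul, Matrix.smul_mul, Matrix.mul_smul, ← hRT, ← hMdef]
    have hcoeff : σ ^ 2 = μ * ε - (μ * μ) * c := by
      rw [hσ2]
      have h : μ * (μ * c) = μ * (ε / 2) := by rw [hμc]
      nlinarith [h]
    rw [hcoeff]
    ext i j
    simp only [Matrix.sub_apply, Matrix.add_apply, Matrix.smul_apply, Matrix.one_apply,
      smul_eq_mul, star_trivial]
    ring
  rw [hexp]
  exact (posSemidef_smul hPε hμ.le).add (posSemidef_smul hMc (by positivity))
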